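/- Let H = Σ_{i=1}^r τ_i z_i z_i^T with binary vectors z_i ∈ {0,1}^n and coefficients τ_i > 0 summing to 1, and define A = Σ_{i=1}^r τ_i s_i s_i^T where s_i = 2z_i − 𝟙. Let R = I − n^{−1}𝟙𝟙^T be the orthogonal projector onto the orthogonal complement of 𝟙. Then A is the unique symmetric n×n matrix X satisfying diag(X) = 𝟙 and R(4H − X)R = 0. -/
import Mathlib


open Matrix

noncomputable section

/-- with `H = Σ τ_i z_i z_iᵀ` (binary `z_i`, proper convex coefficients),
`A = Σ τ_i s_i s_iᵀ` where `s_i = 2z_i − 𝟙`, and `R = I − n⁻¹ 𝟙𝟙ᵀ`, the matrix `A` is the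
unique symmetric matrix `X` with unit diagonal satisfying `R (4H − X) R = 0`. -/
theorem bcd_reduction_linear_system {n r : ℕ}
    (z : Fin r → Fin n → ℝ) (hz : ∀ i k, z i k = 0 ∨ z i k = 1)
    (τ : Fin r → ℝ) (hτ : ∀ i, 0 < τ i) (hτsum : ∑ i, τ i = 1)
    (H A R : Matrix (Fin n) (Fin n) ℝ)
    (hH : H = ∑ i, τ i • vecMulVec (z i) (z i))
    (hA : A = ∑ i, τ i • vecMulVec (fun k => 2 * z i k - 1) (fun k => 2 * z i k - 1))
    (hR : R = 1 - (n : ℝ)⁻¹ • vecMulVec (fun _ => 1) (fun _ => 1)) :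
    ((∀ i, A i i = 1) ∧ R * ((4 : ℝ) • H - A) * R = 0) ∧
      ∀ X : Matrix (Fin n) (Fin n) ℝ, X.IsSymm → (∀ i, X i i = 1) →
        R * ((4 : ℝ) • H - X) * R = 0 → X = A := by
  have hAdiag : ∀ i, A i i = 1 := by
    intro i
    rw [hA]
    simp only [Matrix.sum_apply, Matrix.smul_apply, vecMulVec_apply, smul_eq_mul]
    have h1 : ∀ t ∈ Finset.univ, τ t * ((2 * z t i - 1) * (2 * z t i - 1)) = τ t := by
      intro t _
      rcases hz t i with h | h <;> rw [h] <;> ring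
    rw [Finset.sum_congr rfl h1, hτsum]
  rcases Nat.eq_zero_or_pos n with hn | hn
  · subst hn
    refine ⟨⟨hAdiag, ?_⟩, fun X _ _ _ => ?_⟩ <;> ext i j <;> exact i.elim0
  have hnR : (0:ℝ) < (n:ℝ) := by exact_mod_cast hn
  have hne : (n:ℝ) ≠ 0 := ne_of_gt hnR
  have hnc : (n:ℝ) * (n:ℝ)⁻¹ = 1 := mul_inv_cancel₀ hne
  -- multiplication by R on the right / left, entrywise
  have hNR : ∀ N : Matrix (Fin n) (Fin n) ℝ, ∀ i j,
      (N * R) i j = N i j - (n:ℝ)⁻¹ * ∑ k, N i k := by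
    intro N i j
    rw [hR, Matrix.mul_sub, Matrix.mul_one, Matrix.mul_smul]
    simp [Matrix.mul_apply, vecMulVec_apply, Finset.mul_sum]
  have hRN : ∀ N : Matrix (Fin n) (Fin n) ℝ, ∀ i j,
      (R * N) i j = N i j - (n:ℝ)⁻¹ * ∑ k, N k j := by
    intro N i j
    rw [hR, Matrix.sub_mul, Matrix.one_mul, Matrix.smul_mul]
    simp [Matrix.mul_apply, vecMulVec_apply, Finset.mul_sum]
  -- the key entrywise formula for R * N * R
  have key : ∀ N : Matrix (Fin n) (Fin n) ℝ, ∀ i j,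
      (R * N * R) i j = N i j - (n:ℝ)⁻¹ * (∑ k, N k j) - (n:ℝ)⁻¹ * (∑ k, N i k)
        + (n:ℝ)⁻¹ * (n:ℝ)⁻¹ * (∑ k, ∑ l, N k l) := by
    intro N i j
    rw [hNR (R * N) i j, hRN N i j,
      Finset.sum_congr rfl (fun k _ => hRN N i k), Finset.sum_sub_distrib,
      ← Finset.mul_sum]
    rw [show (∑ k, ∑ l, N l k) = ∑ k, ∑ l, N k l from Finset.sum_comm]
    ring
  -- entry formula for 4H - A
  set w : Fin n → ℝ := fun i => ∑ t, τ t * z t i with hw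
  have hws : ∀ i, ∑ t, τ t * (2 * z t i) = 2 * w i := by
    intro i
    rw [hw, Finset.mul_sum]
    exact Finset.sum_congr rfl fun t _ => by ring
  have hDij : ∀ i j, ((4:ℝ) • H - A) i j = 2 * w i + 2 * w j - 1 := by
    intro i j
    rw [Matrix.sub_apply, Matrix.smul_apply, hH, hA]
    simp only [Matrix.sum_apply, Matrix.smul_apply, vecMulVec_apply, smul_eq_mul]
    rw [Finset.mul_sum, ← Finset.sum_sub_distrib]
    have : ∀ t ∈ Finset.univ, 4 * (τ t * (z t i * z t j)) -
        τ t * ((2 * z t i - 1) * (2 * z t j - 1)) =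
        τ t * (2 * z t i) + τ t * (2 * z t j) - τ t := fun t _ => by ring
    rw [Finset.sum_congr rfl this, Finset.sum_sub_distrib, Finset.sum_add_distrib,
      hws i, hws j, hτsum]
  set W : ℝ := ∑ k, w k with hW
  have hrow : ∀ i, ∑ k, ((4:ℝ) • H - A) i k = (n:ℝ) * (2 * w i) + (2 * W - n) := by
    intro i
    rw [Finset.sum_congr rfl (fun k _ => hDij i k), Finset.sum_sub_distrib,
      Finset.sum_add_distrib, Finset.sum_const, ← Finset.mul_sum, Finset.sum_const,
      Finset.card_univ, Fintype.card_fin, nsmul_eq_mul, nsmul_eq_mul, ← hW]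
    ring
  have hcol : ∀ j, ∑ k, ((4:ℝ) • H - A) k j = (n:ℝ) * (2 * w j) + (2 * W - n) := by
    intro j
    rw [Finset.sum_congr rfl (fun k _ => hDij k j), Finset.sum_sub_distrib,
      Finset.sum_add_distrib, ← Finset.mul_sum, Finset.sum_const, Finset.sum_const,
      Finset.card_univ, Fintype.card_fin, nsmul_eq_mul, nsmul_eq_mul, ← hW]
    ring
  have htot : ∑ k, ∑ l, ((4:ℝ) • H - A) k l = (n:ℝ) * (2 * W) + (n:ℝ) * (2 * W - n) := by
    rw [Finset.sum_congr rfl (fun k _ => hrow k), Finset.sum_add_distrib,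
      ← Finset.mul_sum, ← Finset.mul_sum, Finset.sum_const, Finset.card_univ,
      Fintype.card_fin, nsmul_eq_mul, ← hW]
  have hexist : R * ((4:ℝ) • H - A) * R = 0 := by
    ext i j
    rw [key, hDij, hrow i, hcol j, htot, Matrix.zero_apply]
    field_simp
    ring
  refine ⟨⟨hAdiag, hexist⟩, ?_⟩
  intro X hXsym hXdiag hXR
  have hDR : R * (A - X) * R = 0 := by
    have h : A - X = ((4:ℝ) • H - X) - ((4:ℝ) • H - A) := by abel
    rw [h, Matrix.mul_sub, Matrix.sub_mul, hXR, hexist, sub_zero]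
  -- symmetry of A - X
  have hAsymm : ∀ i j, A i j = A j i := by
    intro i j
    rw [hA]
    simp only [Matrix.sum_apply, Matrix.smul_apply, vecMulVec_apply, smul_eq_mul]
    exact Finset.sum_congr rfl fun t _ => by ring
  have hXs : ∀ i j, X i j = X j i := fun i j => by
    simpa using congrFun (congrFun hXsym j) i
  have hDsym : ∀ i j, (A - X) i j = (A - X) j i := by
    intro i j
    simp only [Matrix.sub_apply, hAsymm i j, hXs i j]
  set f : Fin n → ℝ := fun i => ∑ k, (A - X) i k with hf
  have hcolf : ∀ j, ∑ k, (A - X) k j = f j := fun j =>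
    Finset.sum_congr rfl fun k _ => hDsym k j
  have heq : ∀ i j, (A - X) i j =
      (n:ℝ)⁻¹ * f j + (n:ℝ)⁻¹ * f i - (n:ℝ)⁻¹ * (n:ℝ)⁻¹ * (∑ k, f k) := by
    intro i j
    have h1 := key (A - X) i j
    rw [hDR, Matrix.zero_apply, hcolf j] at h1
    have h2 : ∑ k, ∑ l, (A - X) k l = ∑ k, f k := rfl
    rw [h2] at h1
    linarith [h1]
  have hdiag0 : ∀ i, (A - X) i i = 0 := fun i => by
    simp [Matrix.sub_apply, hAdiag i, hXdiag i]
  have hfi : ∀ i, 2 * ((n:ℝ)⁻¹ * f i) = (n:ℝ)⁻¹ * (n:ℝ)⁻¹ * (∑ k, f k) := by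
    intro i
    have h := heq i i
    rw [hdiag0 i] at h
    linarith [h]
  have hTc : (n:ℝ)⁻¹ * (∑ k, f k) = 0 := by
    have hs : ∑ i, 2 * ((n:ℝ)⁻¹ * f i) =
        ∑ _i : Fin n, (n:ℝ)⁻¹ * (n:ℝ)⁻¹ * (∑ k, f k) :=
      Finset.sum_congr rfl fun i _ => hfi i
    rw [← Finset.mul_sum, ← Finset.mul_sum, Finset.sum_const, Finset.card_univ,
      Fintype.card_fin, nsmul_eq_mul] at hs
    linear_combination hs + ((n:ℝ)⁻¹ * (∑ k, f k)) * hnc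
  have hcf : ∀ i, (n:ℝ)⁻¹ * f i = 0 := by
    intro i
    linear_combination (hfi i) / 2 + ((n:ℝ)⁻¹ / 2) * hTc
  ext i j
  have h0 : (A - X) i j = 0 := by
    rw [heq i j]
    linear_combination hcf j + hcf i - (n:ℝ)⁻¹ * hTc
  have h0' : A i j - X i j = 0 := h0
  linarith [h0']
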